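/- Let m = qn + r with q, r nonnegative integers, n a positive integer, and n/2 ≤ r < n. Then L(m,n) = m + n − r = n(q+1); that is, every A ∈ D(m,n) satisfies tdet A ≥ n(q+1), and there exists A ∈ D(m,n) with tdet A = n(q+1). -/

import Mathlib

/-- D(m,n): n×n matrices with nonnegative integer entries, all row and column sums equal m. -/
def IsDSM (m n : ℕ) (A : Fin n → Fin n → ℕ) : Prop :=
  (∀ i, ∑ j, A i j = m) ∧ (∀ j, ∑ i, A i j = m)

/-- tdet A: maximum of a transversal sum over all permutations. -/
def tdet {n : ℕ} (A : Fin n → Fin n → ℕ) : ℕ :=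
  Finset.univ.sup fun σ : Equiv.Perm (Fin n) => ∑ i, A i (σ i)

open Finset

lemma transversal_le_tdet {n : ℕ} (A : Fin n → Fin n → ℕ) (σ : Equiv.Perm (Fin n)) :
    ∑ i, A i (σ i) ≤ tdet A :=
  Finset.le_sup (f := fun σ : Equiv.Perm (Fin n) => ∑ i, A i (σ i)) (Finset.mem_univ σ)

/-- The lower bound, via Egerváry-style duality. -/
lemma lower_bound (m n q r : ℕ) (hn : 0 < n) (hm : m = q * n + r)
    (hr1 : n ≤ 2 * r) (hr2 : r < n)
    (A : Fin n → Fin n → ℕ) (hA : IsDSM m n A) : n * (q + 1) ≤ tdet A := by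
  classical
  haveI : NeZero n := ⟨hn.ne'⟩
  set P : ℤ → Prop := fun k => ∃ u v : Fin n → ℤ,
    (∀ i j, (A i j : ℤ) ≤ u i + v j) ∧ (∑ i, u i) + (∑ j, v j) = k with hP
  -- bounded below by 0
  have hbdd : ∀ k, P k → (0:ℤ) ≤ k := by
    rintro k ⟨u, v, hf, hs⟩
    have h1 : (0:ℤ) ≤ ∑ i, (u i + v i) :=
      Finset.sum_nonneg fun i _ => le_trans (Int.natCast_nonneg _) (hf i i)
    rw [Finset.sum_add_distrib] at h1
    omega
  -- nonempty
  have hne : P (n * m) := by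
    refine ⟨fun _ => (m:ℤ), fun _ => 0, fun i j => ?_, by simp [mul_comm]⟩
    have : A i j ≤ m := by
      rw [← hA.1 i]
      exact Finset.single_le_sum (fun j _ => Nat.zero_le _) (Finset.mem_univ j)
    simpa using (Int.ofNat_le.mpr this)
  obtain ⟨k0, hk0, hmin⟩ := Int.exists_least_of_bdd ⟨0, hbdd⟩ ⟨_, hne⟩
  obtain ⟨u0, v0, hf0, hs0⟩ := hk0
  -- shift so that min v = 0
  set c : ℤ := Finset.univ.inf' Finset.univ_nonempty v0 with hc
  set u : Fin n → ℤ := fun i => u0 i + c with hu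
  set v : Fin n → ℤ := fun j => v0 j - c with hv
  have hf : ∀ i j, (A i j : ℤ) ≤ u i + v j := fun i j => by
    simpa [hu, hv, add_sub_cancel, add_comm, add_left_comm, add_assoc,
      sub_eq_add_neg] using hf0 i j
  have hs : (∑ i, u i) + (∑ j, v j) = k0 := by
    simp only [hu, hv, Finset.sum_add_distrib, Finset.sum_sub_distrib, Finset.sum_const,
      Finset.card_univ, Fintype.card_fin, nsmul_eq_mul]
    linarith [hs0]
  have hvnn : ∀ j, 0 ≤ v j := fun j => by
    have h1 : c ≤ v0 j := Finset.inf'_le v0 (Finset.mem_univ j)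
    simp only [hv]
    omega
  obtain ⟨j0, -, hj0⟩ := Finset.exists_mem_eq_inf' (Finset.univ_nonempty) v0
  have hvj0 : v j0 = 0 := by simp [hv, ← hj0, hc]
  -- Hall condition on tight graph
  set t : Fin n → Finset (Fin n) := fun i =>
    Finset.univ.filter fun j => u i + v j = (A i j : ℤ) with ht
  have hall : ∀ S : Finset (Fin n), S.card ≤ (S.biUnion t).card := by
    intro S
    by_contra hS
    push_neg at hS
    set N := S.biUnion t with hN
    set u' : Fin n → ℤ := fun i => u i - (if i ∈ S then 1 else 0) with hu'
    set v' : Fin n → ℤ := fun j => v j + (if j ∈ N then 1 else 0) with hv'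
    have hfeas : ∀ i j, (A i j : ℤ) ≤ u' i + v' j := by
      intro i j
      by_cases hiS : i ∈ S
      · by_cases hjN : j ∈ N
        · have := hf i j; simp [hu', hv', hiS, hjN]; omega
        · have hne : u i + v j ≠ (A i j : ℤ) := by
            intro h
            exact hjN (Finset.mem_biUnion.mpr ⟨i, hiS, by simp [ht, h]⟩)
          have := hf i j
          simp [hu', hv', hiS, hjN]
          omega
      · have h1 : (0:ℤ) ≤ (if j ∈ N then (1:ℤ) else 0) := by positivity
        have := hf i j
        simp [hu', hv', hiS]
        omega
    have hsum : (∑ i, u' i) + (∑ j, v' j) = k0 - S.card + N.card := by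
      simp only [hu', hv', Finset.sum_sub_distrib, Finset.sum_add_distrib, Finset.sum_boole]
      have : (Finset.univ.filter fun i => i ∈ S) = S := by
        ext x; simp
      have h2 : (Finset.univ.filter fun j => j ∈ N) = N := by
        ext x; simp
      rw [this, h2]
      linarith [hs]
    have := hmin _ ⟨u', v', hfeas, hsum⟩
    have hcast : (N.card : ℤ) < (S.card : ℤ) := by exact_mod_cast hS
    omega
  obtain ⟨f, hfinj, hft⟩ := (Finset.all_card_le_biUnion_card_iff_exists_injective t).mp hall
  set σ : Equiv.Perm (Fin n) := Equiv.ofBijective f ((Finite.injective_iff_bijective).mp hfinj)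
    with hσ
  have htight : ∀ i, (A i (σ i) : ℤ) = u i + v (σ i) := by
    intro i
    have := hft i
    simp only [ht, Finset.mem_filter] at this
    exact this.2.symm
  have hsum_eq : ((∑ i, A i (σ i) : ℕ) : ℤ) = k0 := by
    push_cast
    calc ∑ i, ((A i (σ i) : ℤ)) = ∑ i, (u i + v (σ i)) := by
          exact Finset.sum_congr rfl fun i _ => htight i
      _ = (∑ i, u i) + (∑ i, v (σ i)) := Finset.sum_add_distrib
      _ = (∑ i, u i) + (∑ j, v j) := by rw [Equiv.sum_comp σ v]
      _ = k0 := hs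
  -- arithmetic lower bound on k0
  have hU : (m : ℤ) ≤ ∑ i, u i := by
    have hcol0 := hA.2 j0
    have hcol : ∑ i, ((A i j0 : ℤ)) = (m : ℤ) := by exact_mod_cast hcol0
    calc (m:ℤ) = ∑ i, (A i j0 : ℤ) := hcol.symm
      _ ≤ ∑ i, (u i + v j0) := Finset.sum_le_sum fun i _ => hf i j0
      _ = ∑ i, u i := by simp [hvj0]
  have hV0 : (0:ℤ) ≤ ∑ j, v j := Finset.sum_nonneg fun j _ => hvnn j
  have hk0ge : (n * (q + 1) : ℤ) ≤ k0 := by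
    rcases le_or_gt ((n:ℤ) - r) (∑ j, v j) with hV | hV
    · have : (m:ℤ) = q * n + r := by exact_mod_cast hm
      rw [← hs]
      push_cast
      nlinarith
    · -- V ≤ n - r - 1, so each u i ≥ q + 1
      have huq : ∀ i, (q:ℤ) + 1 ≤ u i := by
        intro i
        have hrow0 := hA.1 i
        have hrow : ∑ j, ((A i j : ℤ)) = (m : ℤ) := by exact_mod_cast hrow0
        have h1 : (m:ℤ) ≤ n * u i + ∑ j, v j := by
          calc (m:ℤ) = ∑ j, (A i j : ℤ) := hrow.symm
            _ ≤ ∑ j, (u i + v j) := Finset.sum_le_sum fun j _ => hf i j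
            _ = n * u i + ∑ j, v j := by
                rw [Finset.sum_add_distrib]
                simp [Finset.sum_const, Finset.card_univ, mul_comm]
        have hm' : (m:ℤ) = q * n + r := by exact_mod_cast hm
        have hr1' : (n:ℤ) ≤ 2 * r := by exact_mod_cast hr1
        have h2 : (n:ℤ) * q < n * u i := by linarith
        have hn' : (0:ℤ) < n := by exact_mod_cast hn
        have := lt_of_mul_lt_mul_left (by linarith : (n:ℤ) * q < n * u i) (le_of_lt hn')
        omega
      have : (n:ℤ) * (q + 1) ≤ ∑ i, u i := by
        calc (n:ℤ) * (q + 1) = ∑ _i : Fin n, ((q:ℤ) + 1) := by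
              simp [Finset.sum_const, Finset.card_univ, mul_comm]
          _ ≤ ∑ i, u i := Finset.sum_le_sum fun i _ => huq i
      rw [← hs]; push_cast; nlinarith
  have := transversal_le_tdet A σ
  have hfin : ((n * (q+1) : ℕ) : ℤ) ≤ ((tdet A : ℕ) : ℤ) := by
    push_cast
    calc ((n:ℤ) * (q + 1)) ≤ k0 := hk0ge
      _ = ((∑ i, A i (σ i) : ℕ) : ℤ) := hsum_eq.symm
      _ ≤ (tdet A : ℤ) := by exact_mod_cast this
  exact_mod_cast hfin

/-- The circulant construction achieving the minimum. -/
lemma upper_bound (m n q r : ℕ) (hn : 0 < n) (hm : m = q * n + r)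
    (hr1 : n ≤ 2 * r) (hr2 : r < n) :
    ∃ A : Fin n → Fin n → ℕ, IsDSM m n A ∧ tdet A = n * (q + 1) := by
  classical
  haveI : NeZero n := ⟨hn.ne'⟩
  have hr0 : 0 < r := by omega
  set B : Fin n → Fin n → ℕ := fun i j => if ((j - i : Fin n) : ℕ) < r then 1 else 0 with hB
  have hcard : (Finset.univ.filter fun k : Fin n => (k : ℕ) < r).card = r := by
    apply Finset.card_eq_of_bijective (fun i h => (⟨i, h.trans hr2⟩ : Fin n))
    · intro a ha
      simp only [Finset.mem_filter, Finset.mem_univ, true_and] at ha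
      exact ⟨a.1, ha, by simp⟩
    · intro i h; simp [h]
    · intro i j hi hj hij
      simpa [Fin.ext_iff] using hij
  have hrow : ∀ i, ∑ j, B i j = r := by
    intro i
    rw [hB, Finset.sum_boole]
    have heq : (Finset.univ.filter fun j : Fin n => ((j - i : Fin n) : ℕ) < r).card
        = (Finset.univ.filter fun k : Fin n => (k : ℕ) < r).card := by
      apply Finset.card_nbij' (fun j => j - i) (fun k => k + i)
      · intro a ha; simpa using ha
      · intro a ha; simpa using ha
      · intro a _; simp
      · intro a _; simp
    norm_cast
    rw [heq, hcard]
  have hcol : ∀ j, ∑ i, B i j = r := by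
    intro j
    rw [hB, Finset.sum_boole]
    have heq : (Finset.univ.filter fun i : Fin n => ((j - i : Fin n) : ℕ) < r).card
        = (Finset.univ.filter fun k : Fin n => (k : ℕ) < r).card := by
      apply Finset.card_nbij' (fun i => j - i) (fun k => j - k)
      · intro a ha; simpa using ha
      · intro a ha; simpa using ha
      · intro a _; simp
      · intro a _; simp
    norm_cast
    rw [heq, hcard]
  refine ⟨fun i j => q + B i j, ⟨fun i => ?_, fun j => ?_⟩, ?_⟩
  · rw [Finset.sum_add_distrib, hrow i]
    simp [Finset.sum_const, Finset.card_univ, hm, mul_comm]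
  · rw [Finset.sum_add_distrib, hcol j]
    simp [Finset.sum_const, Finset.card_univ, hm, mul_comm]
  · apply le_antisymm
    · apply Finset.sup_le
      intro σ _
      calc ∑ i, (q + B i (σ i)) ≤ ∑ _i : Fin n, (q + 1) := by
            apply Finset.sum_le_sum
            intro i _
            have : B i (σ i) ≤ 1 := by simp only [hB]; split <;> omega
            omega
        _ = n * (q + 1) := by simp [Finset.sum_const, Finset.card_univ, mul_comm]
    · have hdiag : ∀ i : Fin n, B i i = 1 := by
        intro i
        rw [hB]
        simp [hr0]
      calc n * (q + 1) = ∑ i : Fin n, (q + B i ((1 : Equiv.Perm (Fin n)) i)) := by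
            simp [hdiag, Finset.sum_const, Finset.card_univ, mul_comm]
        _ ≤ tdet (fun i j => q + B i j) := transversal_le_tdet (fun i j => q + B i j) 1
/-- If m = qn + r with n/2 ≤ r < n, then L(m,n) = m + n - r = n(q+1). -/
theorem L_eq_large_r (m n q r : ℕ) (hn : 0 < n)
    (hm : m = q * n + r) (hr1 : n ≤ 2 * r) (hr2 : r < n) :
    (∀ A : Fin n → Fin n → ℕ, IsDSM m n A → n * (q + 1) ≤ tdet A) ∧
    (∃ A : Fin n → Fin n → ℕ, IsDSM m n A ∧ tdet A = n * (q + 1)) ∧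
    m + n - r = n * (q + 1) := by
  refine ⟨fun A hA => lower_bound m n q r hn hm hr1 hr2 A hA,
    upper_bound m n q r hn hm hr1 hr2, by
      have h : n * (q + 1) = q * n + n := by ring
      omega⟩
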